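/- Let q be a real number with 0 < q < 1, n a natural number, and A an associative unital ℂ-algebra containing elements z_0,…,z_n, ẑ_0,…,ẑ_n, c satisfying: z_i z_j = q z_j z_i for i<j; ẑ_i ẑ_j = q^{-1} ẑ_j ẑ_i for i<j; z_i ẑ_j = q ẑ_j z_i for i≠j; z_i ẑ_i − ẑ_i z_i = (q^{-2}−1)(Σ_{k>i} z_k ẑ_k + q·c) for every i; z_i c = q² c z_i and ẑ_i c = q^{-2} c ẑ_i for every i. For i = 0,…,n+1 set x_i = Σ_{k≥i} z_k ẑ_k + q·c (so x_{n+1} = q·c). Then: (1) x_i x_j = x_j x_i for all i, j; (2) z_i x_j = q² x_j z_i and ẑ_i x_j = q^{-2} x_j ẑ_i whenever i < j; (3) z_i x_j = x_j z_i and ẑ_i x_j = x_j ẑ_i whenever i ≥ j; (4) the element d = q·x_0 commutes with every z_i, every ẑ_i, and with c. -/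

import Mathlib

open Finset

set_option linter.unusedSectionVars false
set_option maxHeartbeats 1000000

section QFlagAux

variable {n : ℕ} {A : Type*} [Ring A] [Algebra ℂ A]

/-- auxiliary partial sum `∑_{k ≥ m} z k * ẑ k` -/
def qfS (z zh : Fin (n + 1) → A) (m : ℕ) : A :=
  ∑ k ∈ Finset.univ.filter (fun k : Fin (n + 1) => m ≤ (k : ℕ)), z k * zh k

/-- the element `x_m = ∑_{k ≥ m} z k * ẑ k + q • c` -/
def qfX (q : ℂ) (z zh : Fin (n + 1) → A) (c : A) (m : ℕ) : A :=
  qfS z zh m + q • c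

variable (q : ℂ) (z zh : Fin (n + 1) → A) (c : A)

lemma qfX_split (m m' : ℕ) (h : m ≤ m') :
    qfX q z zh c m
      = (∑ k ∈ Finset.univ.filter
            (fun k : Fin (n + 1) => m ≤ (k : ℕ) ∧ (k : ℕ) < m'), z k * zh k)
        + qfX q z zh c m' := by
  unfold qfX qfS
  rw [← Finset.sum_filter_add_sum_filter_not
      (Finset.univ.filter (fun k : Fin (n + 1) => m ≤ (k : ℕ)))
      (fun k : Fin (n + 1) => (k : ℕ) < m'), add_assoc]
  congr 2
  · rw [Finset.filter_filter]
  · rw [Finset.filter_filter]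
    apply Finset.sum_congr _ (fun _ _ => rfl)
    ext k
    simp only [Finset.mem_filter, Finset.mem_univ, true_and]
    omega

lemma qfX_succ (i : Fin (n + 1)) :
    qfX q z zh c (i : ℕ) = z i * zh i + qfX q z zh c ((i : ℕ) + 1) := by
  unfold qfX qfS
  have h : Finset.univ.filter (fun k : Fin (n + 1) => (i : ℕ) ≤ (k : ℕ))
      = insert i (Finset.univ.filter (fun k : Fin (n + 1) => (i : ℕ) + 1 ≤ (k : ℕ))) := by
    ext k
    simp only [Finset.mem_filter, Finset.mem_univ, true_and, Finset.mem_insert, Fin.ext_iff]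
    omega
  rw [h, Finset.sum_insert (by simp), add_assoc]

lemma qf_t1 (hzz : ∀ i j : Fin (n + 1), (i : ℕ) < (j : ℕ) → z i * z j = q • (z j * z i))
    (hzzh : ∀ i j : Fin (n + 1), i ≠ j → z i * zh j = q • (zh j * z i))
    {i k : Fin (n + 1)} (h : (i : ℕ) < (k : ℕ)) :
    z i * (z k * zh k) = (q ^ 2) • ((z k * zh k) * z i) := by
  have hne : i ≠ k := by intro e; subst e; omega
  calc z i * (z k * zh k) = (z i * z k) * zh k := (mul_assoc _ _ _).symm
    _ = (q • (z k * z i)) * zh k := by rw [hzz i k h]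
    _ = q • (z k * (z i * zh k)) := by rw [smul_mul_assoc, mul_assoc]
    _ = q • (z k * (q • (zh k * z i))) := by rw [hzzh i k hne]
    _ = (q * q) • (z k * (zh k * z i)) := by rw [mul_smul_comm, smul_smul]
    _ = (q ^ 2) • ((z k * zh k) * z i) := by rw [sq, mul_assoc]

lemma qf_t2 (hq : q ≠ 0)
    (hzhzh : ∀ i j : Fin (n + 1), (i : ℕ) < (j : ℕ) → zh i * zh j = q⁻¹ • (zh j * zh i))
    (hzzh : ∀ i j : Fin (n + 1), i ≠ j → z i * zh j = q • (zh j * z i))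
    {i k : Fin (n + 1)} (h : (i : ℕ) < (k : ℕ)) :
    zh i * (z k * zh k) = (q ^ 2)⁻¹ • ((z k * zh k) * zh i) := by
  have hne : k ≠ i := by intro e; subst e; omega
  have h1 : zh i * z k = q⁻¹ • (z k * zh i) := by
    rw [hzzh k i hne, inv_smul_smul₀ hq]
  calc zh i * (z k * zh k) = (zh i * z k) * zh k := (mul_assoc _ _ _).symm
    _ = q⁻¹ • (z k * (zh i * zh k)) := by rw [h1, smul_mul_assoc, mul_assoc]
    _ = q⁻¹ • (z k * (q⁻¹ • (zh k * zh i))) := by rw [hzhzh i k h]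
    _ = (q⁻¹ * q⁻¹) • (z k * (zh k * zh i)) := by rw [mul_smul_comm, smul_smul]
    _ = (q ^ 2)⁻¹ • ((z k * zh k) * zh i) := by rw [sq, mul_inv, mul_assoc]

lemma qf_t3 (hq : q ≠ 0)
    (hzz : ∀ i j : Fin (n + 1), (i : ℕ) < (j : ℕ) → z i * z j = q • (z j * z i))
    (hzzh : ∀ i j : Fin (n + 1), i ≠ j → z i * zh j = q • (zh j * z i))
    {i k : Fin (n + 1)} (h : (k : ℕ) < (i : ℕ)) :
    z i * (z k * zh k) = (z k * zh k) * z i := by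
  have hne : i ≠ k := by intro e; subst e; omega
  have h1 : z i * z k = q⁻¹ • (z k * z i) := by
    rw [hzz k i h, inv_smul_smul₀ hq]
  calc z i * (z k * zh k) = (z i * z k) * zh k := (mul_assoc _ _ _).symm
    _ = q⁻¹ • (z k * (z i * zh k)) := by rw [h1, smul_mul_assoc, mul_assoc]
    _ = q⁻¹ • (z k * (q • (zh k * z i))) := by rw [hzzh i k hne]
    _ = (q⁻¹ * q) • (z k * (zh k * z i)) := by rw [mul_smul_comm, smul_smul]
    _ = (z k * zh k) * z i := by rw [inv_mul_cancel₀ hq, one_smul, mul_assoc]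

lemma qf_t4 (hq : q ≠ 0)
    (hzhzh : ∀ i j : Fin (n + 1), (i : ℕ) < (j : ℕ) → zh i * zh j = q⁻¹ • (zh j * zh i))
    (hzzh : ∀ i j : Fin (n + 1), i ≠ j → z i * zh j = q • (zh j * z i))
    {i k : Fin (n + 1)} (h : (k : ℕ) < (i : ℕ)) :
    zh i * (z k * zh k) = (z k * zh k) * zh i := by
  have hne : k ≠ i := by intro e; subst e; omega
  have h1 : zh i * z k = q⁻¹ • (z k * zh i) := by
    rw [hzzh k i hne, inv_smul_smul₀ hq]
  have h2 : zh i * zh k = q • (zh k * zh i) := by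
    rw [hzhzh k i h, smul_inv_smul₀ hq]
  calc zh i * (z k * zh k) = (zh i * z k) * zh k := (mul_assoc _ _ _).symm
    _ = q⁻¹ • (z k * (zh i * zh k)) := by rw [h1, smul_mul_assoc, mul_assoc]
    _ = q⁻¹ • (z k * (q • (zh k * zh i))) := by rw [h2]
    _ = (q⁻¹ * q) • (z k * (zh k * zh i)) := by rw [mul_smul_comm, smul_smul]
    _ = (z k * zh k) * zh i := by rw [inv_mul_cancel₀ hq, one_smul, mul_assoc]

lemma qf_t5 (hq : q ≠ 0)
    (hzc : ∀ i : Fin (n + 1), z i * c = (q ^ 2) • (c * z i))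
    (hzhc : ∀ i : Fin (n + 1), zh i * c = (q ^ 2)⁻¹ • (c * zh i))
    (k : Fin (n + 1)) :
    (z k * zh k) * c = c * (z k * zh k) := by
  have hq2 : q ^ 2 ≠ 0 := pow_ne_zero _ hq
  calc (z k * zh k) * c = z k * (zh k * c) := mul_assoc _ _ _
    _ = (q ^ 2)⁻¹ • ((z k * c) * zh k) := by
        rw [hzhc k, mul_smul_comm, mul_assoc]
    _ = (q ^ 2)⁻¹ • (((q ^ 2) • (c * z k)) * zh k) := by rw [hzc k]
    _ = ((q ^ 2)⁻¹ * q ^ 2) • ((c * z k) * zh k) := by rw [smul_mul_assoc, smul_smul]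
    _ = c * (z k * zh k) := by rw [inv_mul_cancel₀ hq2, one_smul, mul_assoc]

lemma qf_zX_lt (hzz : ∀ i j : Fin (n + 1), (i : ℕ) < (j : ℕ) → z i * z j = q • (z j * z i))
    (hzzh : ∀ i j : Fin (n + 1), i ≠ j → z i * zh j = q • (zh j * z i))
    (hzc : ∀ i : Fin (n + 1), z i * c = (q ^ 2) • (c * z i))
    (i : Fin (n + 1)) (m : ℕ) (him : (i : ℕ) < m) :
    z i * qfX q z zh c m = (q ^ 2) • (qfX q z zh c m * z i) := by
  unfold qfX
  rw [mul_add, add_mul, smul_add]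
  congr 1
  · unfold qfS
    rw [Finset.mul_sum, Finset.sum_mul, Finset.smul_sum]
    refine Finset.sum_congr rfl fun k hk => ?_
    simp only [Finset.mem_filter, Finset.mem_univ, true_and] at hk
    exact qf_t1 q z zh hzz hzzh (lt_of_lt_of_le him hk)
  · rw [mul_smul_comm, hzc i, smul_mul_assoc, smul_smul, smul_smul, mul_comm]

lemma qf_zhX_lt (hq : q ≠ 0)
    (hzhzh : ∀ i j : Fin (n + 1), (i : ℕ) < (j : ℕ) → zh i * zh j = q⁻¹ • (zh j * zh i))
    (hzzh : ∀ i j : Fin (n + 1), i ≠ j → z i * zh j = q • (zh j * z i))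
    (hzhc : ∀ i : Fin (n + 1), zh i * c = (q ^ 2)⁻¹ • (c * zh i))
    (i : Fin (n + 1)) (m : ℕ) (him : (i : ℕ) < m) :
    zh i * qfX q z zh c m = (q ^ 2)⁻¹ • (qfX q z zh c m * zh i) := by
  unfold qfX
  rw [mul_add, add_mul, smul_add]
  congr 1
  · unfold qfS
    rw [Finset.mul_sum, Finset.sum_mul, Finset.smul_sum]
    refine Finset.sum_congr rfl fun k hk => ?_
    simp only [Finset.mem_filter, Finset.mem_univ, true_and] at hk
    exact qf_t2 q z zh hq hzhzh hzzh (lt_of_lt_of_le him hk)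
  · rw [mul_smul_comm, hzhc i, smul_mul_assoc, smul_smul, smul_smul, mul_comm]

lemma qf_Xc (hq : q ≠ 0)
    (hzc : ∀ i : Fin (n + 1), z i * c = (q ^ 2) • (c * z i))
    (hzhc : ∀ i : Fin (n + 1), zh i * c = (q ^ 2)⁻¹ • (c * zh i))
    (m : ℕ) :
    qfX q z zh c m * c = c * qfX q z zh c m := by
  unfold qfX
  rw [add_mul, mul_add]
  congr 1
  · unfold qfS
    rw [Finset.sum_mul, Finset.mul_sum]
    exact Finset.sum_congr rfl fun k _ => qf_t5 q z zh c hq hzc hzhc k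
  · rw [smul_mul_assoc, mul_smul_comm]

lemma qf_zX_eq (hq : q ≠ 0)
    (hzz : ∀ i j : Fin (n + 1), (i : ℕ) < (j : ℕ) → z i * z j = q • (z j * z i))
    (hzzh : ∀ i j : Fin (n + 1), i ≠ j → z i * zh j = q • (zh j * z i))
    (hzc : ∀ i : Fin (n + 1), z i * c = (q ^ 2) • (c * z i))
    (hcom' : ∀ i : Fin (n + 1), z i * zh i
        = zh i * z i + ((q ^ 2)⁻¹ - 1) • qfX q z zh c ((i : ℕ) + 1))
    (i : Fin (n + 1)) :
    z i * qfX q z zh c (i : ℕ) = qfX q z zh c (i : ℕ) * z i := by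
  have hq2 : q ^ 2 ≠ 0 := pow_ne_zero _ hq
  have h1 : z i * qfX q z zh c ((i : ℕ) + 1)
      = (q ^ 2) • (qfX q z zh c ((i : ℕ) + 1) * z i) :=
    qf_zX_lt q z zh c hzz hzzh hzc i _ (by omega)
  have e1 : z i * (zh i * z i)
      = zh i * z i * z i + ((q ^ 2)⁻¹ - 1) • (qfX q z zh c ((i : ℕ) + 1) * z i) := by
    rw [← mul_assoc, hcom' i, add_mul, smul_mul_assoc]
  rw [qfX_succ, hcom' i]
  simp only [mul_add, add_mul, mul_smul_comm, smul_mul_assoc]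
  rw [e1, h1]
  match_scalars <;> field_simp <;> ring

lemma qf_zhX_eq (hq : q ≠ 0)
    (hzhzh : ∀ i j : Fin (n + 1), (i : ℕ) < (j : ℕ) → zh i * zh j = q⁻¹ • (zh j * zh i))
    (hzzh : ∀ i j : Fin (n + 1), i ≠ j → z i * zh j = q • (zh j * z i))
    (hzhc : ∀ i : Fin (n + 1), zh i * c = (q ^ 2)⁻¹ • (c * zh i))
    (hcom' : ∀ i : Fin (n + 1), z i * zh i
        = zh i * z i + ((q ^ 2)⁻¹ - 1) • qfX q z zh c ((i : ℕ) + 1))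
    (i : Fin (n + 1)) :
    zh i * qfX q z zh c (i : ℕ) = qfX q z zh c (i : ℕ) * zh i := by
  have hq2 : q ^ 2 ≠ 0 := pow_ne_zero _ hq
  have h2 : zh i * qfX q z zh c ((i : ℕ) + 1)
      = (q ^ 2)⁻¹ • (qfX q z zh c ((i : ℕ) + 1) * zh i) :=
    qf_zhX_lt q z zh c hq hzhzh hzzh hzhc i _ (by omega)
  have hcom2 : zh i * z i
      = z i * zh i - ((q ^ 2)⁻¹ - 1) • qfX q z zh c ((i : ℕ) + 1) := by
    rw [hcom' i, add_sub_cancel_right]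
  have e1 : zh i * (z i * zh i)
      = z i * zh i * zh i - ((q ^ 2)⁻¹ - 1) • (qfX q z zh c ((i : ℕ) + 1) * zh i) := by
    rw [← mul_assoc, hcom2, sub_mul, smul_mul_assoc]
  rw [qfX_succ]
  simp only [mul_add, add_mul]
  rw [e1, h2]
  match_scalars <;> field_simp <;> ring

lemma qf_zX_ge (hq : q ≠ 0)
    (hzz : ∀ i j : Fin (n + 1), (i : ℕ) < (j : ℕ) → z i * z j = q • (z j * z i))
    (hzzh : ∀ i j : Fin (n + 1), i ≠ j → z i * zh j = q • (zh j * z i))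
    (hzc : ∀ i : Fin (n + 1), z i * c = (q ^ 2) • (c * z i))
    (hcom' : ∀ i : Fin (n + 1), z i * zh i
        = zh i * z i + ((q ^ 2)⁻¹ - 1) • qfX q z zh c ((i : ℕ) + 1))
    (i : Fin (n + 1)) (m : ℕ) (h : m ≤ (i : ℕ)) :
    z i * qfX q z zh c m = qfX q z zh c m * z i := by
  rw [qfX_split q z zh c m (i : ℕ) h, mul_add, add_mul,
    qf_zX_eq q z zh c hq hzz hzzh hzc hcom' i]
  congr 1
  rw [Finset.mul_sum, Finset.sum_mul]
  refine Finset.sum_congr rfl fun k hk => ?_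
  simp only [Finset.mem_filter, Finset.mem_univ, true_and] at hk
  exact qf_t3 q z zh hq hzz hzzh hk.2

lemma qf_zhX_ge (hq : q ≠ 0)
    (hzhzh : ∀ i j : Fin (n + 1), (i : ℕ) < (j : ℕ) → zh i * zh j = q⁻¹ • (zh j * zh i))
    (hzzh : ∀ i j : Fin (n + 1), i ≠ j → z i * zh j = q • (zh j * z i))
    (hzhc : ∀ i : Fin (n + 1), zh i * c = (q ^ 2)⁻¹ • (c * zh i))
    (hcom' : ∀ i : Fin (n + 1), z i * zh i
        = zh i * z i + ((q ^ 2)⁻¹ - 1) • qfX q z zh c ((i : ℕ) + 1))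
    (i : Fin (n + 1)) (m : ℕ) (h : m ≤ (i : ℕ)) :
    zh i * qfX q z zh c m = qfX q z zh c m * zh i := by
  rw [qfX_split q z zh c m (i : ℕ) h, mul_add, add_mul,
    qf_zhX_eq q z zh c hq hzhzh hzzh hzhc hcom' i]
  congr 1
  rw [Finset.mul_sum, Finset.sum_mul]
  refine Finset.sum_congr rfl fun k hk => ?_
  simp only [Finset.mem_filter, Finset.mem_univ, true_and] at hk
  exact qf_t4 q z zh hq hzhzh hzzh hk.2

/-- `z k * zh k` commutes with `x m` when `k < m`. -/
lemma qf_wX (hq : q ≠ 0)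
    (hzz : ∀ i j : Fin (n + 1), (i : ℕ) < (j : ℕ) → z i * z j = q • (z j * z i))
    (hzhzh : ∀ i j : Fin (n + 1), (i : ℕ) < (j : ℕ) → zh i * zh j = q⁻¹ • (zh j * zh i))
    (hzzh : ∀ i j : Fin (n + 1), i ≠ j → z i * zh j = q • (zh j * z i))
    (hzc : ∀ i : Fin (n + 1), z i * c = (q ^ 2) • (c * z i))
    (hzhc : ∀ i : Fin (n + 1), zh i * c = (q ^ 2)⁻¹ • (c * zh i))
    (k : Fin (n + 1)) (m : ℕ) (h : (k : ℕ) < m) :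
    (z k * zh k) * qfX q z zh c m = qfX q z zh c m * (z k * zh k) := by
  have hq2 : q ^ 2 ≠ 0 := pow_ne_zero _ hq
  calc (z k * zh k) * qfX q z zh c m = z k * (zh k * qfX q z zh c m) := mul_assoc _ _ _
    _ = (q ^ 2)⁻¹ • ((z k * qfX q z zh c m) * zh k) := by
        rw [qf_zhX_lt q z zh c hq hzhzh hzzh hzhc k m h, mul_smul_comm, mul_assoc]
    _ = (q ^ 2)⁻¹ • (((q ^ 2) • (qfX q z zh c m * z k)) * zh k) := by
        rw [qf_zX_lt q z zh c hzz hzzh hzc k m h]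
    _ = ((q ^ 2)⁻¹ * q ^ 2) • ((qfX q z zh c m * z k) * zh k) := by
        rw [smul_mul_assoc, smul_smul]
    _ = qfX q z zh c m * (z k * zh k) := by rw [inv_mul_cancel₀ hq2, one_smul, mul_assoc]

lemma qf_XX (hq : q ≠ 0)
    (hzz : ∀ i j : Fin (n + 1), (i : ℕ) < (j : ℕ) → z i * z j = q • (z j * z i))
    (hzhzh : ∀ i j : Fin (n + 1), (i : ℕ) < (j : ℕ) → zh i * zh j = q⁻¹ • (zh j * zh i))
    (hzzh : ∀ i j : Fin (n + 1), i ≠ j → z i * zh j = q • (zh j * z i))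
    (hzc : ∀ i : Fin (n + 1), z i * c = (q ^ 2) • (c * z i))
    (hzhc : ∀ i : Fin (n + 1), zh i * c = (q ^ 2)⁻¹ • (c * zh i))
    (a b : ℕ) (h : a ≤ b) :
    qfX q z zh c a * qfX q z zh c b = qfX q z zh c b * qfX q z zh c a := by
  rw [qfX_split q z zh c a b h, add_mul, mul_add]
  congr 1
  rw [Finset.sum_mul, Finset.mul_sum]
  refine Finset.sum_congr rfl fun k hk => ?_
  simp only [Finset.mem_filter, Finset.mem_univ, true_and] at hk
  exact qf_wX q z zh c hq hzz hzhzh hzzh hzc hzhc k b hk.2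

end QFlagAux

/-- commutation properties of the elements
`x i = ∑_{k ≥ i} z k * ẑ k + q • c` in the quantum algebra of homogeneous
polynomial functions on a family of quantum projective spaces, and centrality
of `d = q • x 0`. -/
theorem quantum_flag_x_relations
    (q : ℝ) (hq0 : 0 < q) (hq1 : q < 1) (n : ℕ)
    (A : Type*) [Ring A] [Algebra ℂ A]
    (z zh : Fin (n + 1) → A) (c : A)
    (hzz : ∀ i j : Fin (n + 1), (i : ℕ) < (j : ℕ) →
      z i * z j = (q : ℂ) • (z j * z i))
    (hzhzh : ∀ i j : Fin (n + 1), (i : ℕ) < (j : ℕ) →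
      zh i * zh j = ((q : ℂ))⁻¹ • (zh j * zh i))
    (hzzh : ∀ i j : Fin (n + 1), i ≠ j →
      z i * zh j = (q : ℂ) • (zh j * z i))
    (hcom : ∀ i : Fin (n + 1),
      z i * zh i - zh i * z i =
        ((q : ℂ) ^ (-2 : ℤ) - 1) •
          ((∑ k ∈ Finset.univ.filter (fun k : Fin (n + 1) => (i : ℕ) < (k : ℕ)),
              z k * zh k) + (q : ℂ) • c))
    (hzc : ∀ i : Fin (n + 1), z i * c = ((q : ℂ) ^ 2) • (c * z i))
    (hzhc : ∀ i : Fin (n + 1), zh i * c = ((q : ℂ) ^ 2)⁻¹ • (c * zh i))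
    (x : Fin (n + 2) → A)
    (hx : ∀ i : Fin (n + 2),
      x i = (∑ k ∈ Finset.univ.filter (fun k : Fin (n + 1) => (i : ℕ) ≤ (k : ℕ)),
              z k * zh k) + (q : ℂ) • c)
    (d : A) (hd : d = (q : ℂ) • x 0) :
    (∀ i j : Fin (n + 2), x i * x j = x j * x i) ∧
    (∀ (i : Fin (n + 1)) (j : Fin (n + 2)), (i : ℕ) < (j : ℕ) →
      z i * x j = ((q : ℂ) ^ 2) • (x j * z i) ∧
      zh i * x j = ((q : ℂ) ^ 2)⁻¹ • (x j * zh i)) ∧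
    (∀ (i : Fin (n + 1)) (j : Fin (n + 2)), (j : ℕ) ≤ (i : ℕ) →
      z i * x j = x j * z i ∧ zh i * x j = x j * zh i) ∧
    (∀ i : Fin (n + 1), d * z i = z i * d) ∧
    (∀ i : Fin (n + 1), d * zh i = zh i * d) ∧
    d * c = c * d := by
  have hq : (q : ℂ) ≠ 0 := by
    exact_mod_cast hq0.ne'
  have hx' : ∀ j : Fin (n + 2), x j = qfX (q : ℂ) z zh c (j : ℕ) := by
    intro j; rw [hx j]; rfl
  have hcom' : ∀ i : Fin (n + 1), z i * zh i
      = zh i * z i + (((q : ℂ) ^ 2)⁻¹ - 1) • qfX (q : ℂ) z zh c ((i : ℕ) + 1) := by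
    intro i
    have hz2 : ((q : ℂ)) ^ (-2 : ℤ) = ((q : ℂ) ^ 2)⁻¹ := by
      rw [zpow_neg, zpow_two, sq]
    have hfilter : Finset.univ.filter (fun k : Fin (n + 1) => (i : ℕ) < (k : ℕ))
        = Finset.univ.filter (fun k : Fin (n + 1) => (i : ℕ) + 1 ≤ (k : ℕ)) := by
      ext k
      simp only [Finset.mem_filter, Finset.mem_univ, true_and]
      omega
    have h := hcom i
    rw [hz2, hfilter] at h
    have h4 : z i * zh i - zh i * z i
        = (((q : ℂ) ^ 2)⁻¹ - 1) • qfX (q : ℂ) z zh c ((i : ℕ) + 1) := by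
      unfold qfX qfS
      exact h
    exact (sub_eq_iff_eq_add.mp h4).trans (add_comm _ _)
  refine ⟨?_, ?_, ?_, ?_, ?_, ?_⟩
  · intro i j
    rcases le_total (i : ℕ) (j : ℕ) with h | h
    · rw [hx' i, hx' j]
      exact qf_XX (q : ℂ) z zh c hq hzz hzhzh hzzh hzc hzhc _ _ h
    · rw [hx' i, hx' j]
      exact (qf_XX (q : ℂ) z zh c hq hzz hzhzh hzzh hzc hzhc _ _ h).symm
  · intro i j hij
    rw [hx' j]
    exact ⟨qf_zX_lt (q : ℂ) z zh c hzz hzzh hzc i _ hij,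
      qf_zhX_lt (q : ℂ) z zh c hq hzhzh hzzh hzhc i _ hij⟩
  · intro i j hji
    rw [hx' j]
    exact ⟨qf_zX_ge (q : ℂ) z zh c hq hzz hzzh hzc hcom' i _ hji,
      qf_zhX_ge (q : ℂ) z zh c hq hzhzh hzzh hzhc hcom' i _ hji⟩
  · intro i
    rw [hd, hx' 0, smul_mul_assoc, mul_smul_comm,
      qf_zX_ge (q : ℂ) z zh c hq hzz hzzh hzc hcom' i _ (by simp)]
  · intro i
    rw [hd, hx' 0, smul_mul_assoc, mul_smul_comm,
      qf_zhX_ge (q : ℂ) z zh c hq hzhzh hzzh hzhc hcom' i _ (by simp)]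
  · rw [hd, hx' 0, smul_mul_assoc, mul_smul_comm,
      qf_Xc (q : ℂ) z zh c hq hzc hzhc]
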